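/- Hedberg-type inequality with generalized Morrey kernel norm: under the hypotheses of Theorem on σ, φ (σ doubling, σ(r) ≤ Cr^{-α}, K_{α,γ} ∈ L^{s,σ}, φ(r) ≤ Cr^β with -n/p₁ < β < -α, 1 < p₁ < n/α, 1 ≤ s < n/(n-α)), there is C' such that for every f ∈ L^{p₁,φ} and x ∈ ℝ^n, |I_{α,γ}f(x)| ≤ C' ‖K_{α,γ}‖_{L^{s,σ}} ‖f‖_{L^{p₁,φ}}^{(α-n)/β} (Mf(x))^{1+(n-α)/β}. -/

import Mathlib

open MeasureTheory Metric ENNReal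

noncomputable section

abbrev En (n : ℕ) := EuclideanSpace ℝ (Fin n)

/-- The Bessel-Riesz kernel `K_{α,γ}(x) = |x|^{α-n}/(1+|x|)^γ`. -/
def brKernel (n : ℕ) (α γ : ℝ) (x : En n) : ℝ :=
  ‖x‖ ^ (α - n) / (1 + ‖x‖) ^ γ

/-- The Bessel-Riesz operator `I_{α,γ} f(x) = ∫ K_{α,γ}(x-y) f(y) dy`. -/
def brOp (n : ℕ) (α γ : ℝ) (f : En n → ℝ) (x : En n) : ℝ :=
  ∫ y, brKernel n α γ (x - y) * f y

/-- The Hardy-Littlewood maximal function (sup over balls containing `x`). -/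
def maximalFn (n : ℕ) (f : En n → ℝ) (x : En n) : ℝ≥0∞ :=
  ⨆ (a : En n) (r : ℝ) (_ : 0 < r) (_ : x ∈ ball a r),
    (volume (ball a r))⁻¹ * ∫⁻ y in ball a r, ENNReal.ofReal |f y|

/-- The classical Morrey norm `‖f‖_{L^{p,q}}`. -/
def morreyNorm (n : ℕ) (p q : ℝ) (f : En n → ℝ) : ℝ≥0∞ :=
  ⨆ (r : ℝ) (_ : 0 < r) (a : En n),
    ENNReal.ofReal (r ^ ((n : ℝ) * (1 / q - 1 / p))) *
      (∫⁻ x in ball a r, ENNReal.ofReal (|f x| ^ p)) ^ (1 / p)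

/-- The generalized Morrey norm `‖f‖_{L^{p,φ}}`. -/
def gMorreyNorm (n : ℕ) (p : ℝ) (φ : ℝ → ℝ) (f : En n → ℝ) : ℝ≥0∞ :=
  ⨆ (r : ℝ) (_ : 0 < r) (a : En n),
    (ENNReal.ofReal (φ r))⁻¹ *
      (((ENNReal.ofReal r) ^ (n : ℝ))⁻¹ *
        ∫⁻ x in ball a r, ENNReal.ofReal (|f x| ^ p)) ^ (1 / p)

/-- The generalized Morrey norm for `ℝ≥0∞`-valued functions. -/
def gMorreyNormE (n : ℕ) (p : ℝ) (φ : ℝ → ℝ) (g : En n → ℝ≥0∞) : ℝ≥0∞ :=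
  ⨆ (r : ℝ) (_ : 0 < r) (a : En n),
    (ENNReal.ofReal (φ r))⁻¹ *
      (((ENNReal.ofReal r) ^ (n : ℝ))⁻¹ * ∫⁻ x in ball a r, (g x) ^ p) ^ (1 / p)

/-! ### Auxiliary lemmas -/

/-- The radial profile of the Bessel-Riesz kernel. -/
def krad (n : ℕ) (α γ : ℝ) (t : ℝ) : ℝ := t ^ (α - n) / (1 + t) ^ γ

lemma brKernel_eq (n : ℕ) (α γ : ℝ) (y : En n) : brKernel n α γ y = krad n α γ ‖y‖ := rfl

lemma krad_pos {n : ℕ} {α γ : ℝ} {t : ℝ} (ht : 0 < t) : 0 < krad n α γ t := by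
  apply div_pos (Real.rpow_pos_of_pos ht _) (Real.rpow_pos_of_pos (by linarith) _)

lemma krad_nonneg {n : ℕ} {α γ : ℝ} {t : ℝ} (ht : 0 ≤ t) : 0 ≤ krad n α γ t :=
  div_nonneg (Real.rpow_nonneg ht _) (Real.rpow_nonneg (by linarith) _)

lemma krad_anti {n : ℕ} {α γ : ℝ} (hαn : α ≤ n) (hγ : 0 ≤ γ) {u v : ℝ} (hu : 0 < u)
    (huv : u ≤ v) : krad n α γ v ≤ krad n α γ u := by
  unfold krad
  apply div_le_div₀ (Real.rpow_nonneg hu.le _)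
    (Real.rpow_le_rpow_of_nonpos hu huv (by linarith))
    (Real.rpow_pos_of_pos (by linarith) _)
    (Real.rpow_le_rpow (by linarith) (by linarith) hγ)

lemma brKernel_nonneg (n : ℕ) (α γ : ℝ) (y : En n) : 0 ≤ brKernel n α γ y :=
  krad_nonneg (norm_nonneg y)

lemma gMorreyNorm_ge (n : ℕ) (p : ℝ) (φ : ℝ → ℝ) (f : En n → ℝ) {r : ℝ} (a : En n)
    (hr : 0 < r) :
    (ENNReal.ofReal (φ r))⁻¹ *
      (((ENNReal.ofReal r) ^ (n : ℝ))⁻¹ *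
        ∫⁻ x in ball a r, ENNReal.ofReal (|f x| ^ p)) ^ (1 / p) ≤ gMorreyNorm n p φ f :=
  le_iSup_of_le r (le_iSup_of_le hr (le_iSup_of_le a le_rfl))

lemma volume_ball_En (n : ℕ) (a : En n) {r : ℝ} (hr : 0 < r) :
    volume (ball a r) = ENNReal.ofReal (r ^ (n : ℕ)) * volume (ball (0 : En n) 1) := by
  rw [Measure.addHaar_ball_of_pos _ _ hr, finrank_euclideanSpace_fin]

lemma vball_pos (n : ℕ) : 0 < volume (ball (0 : En n) 1) := measure_ball_pos _ _ one_pos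

lemma vball_ne_top (n : ℕ) : volume (ball (0 : En n) 1) ≠ ⊤ := measure_ball_lt_top.ne

lemma ofReal_rpow_n {r : ℝ} (hr : 0 < r) (n : ℕ) :
    (ENNReal.ofReal r) ^ (n : ℝ) = ENNReal.ofReal (r ^ (n : ℕ)) := by
  rw [ENNReal.ofReal_rpow_of_pos hr, Real.rpow_natCast]

/-- Key extraction: the radial kernel value is controlled by the kernel Morrey norm. -/
lemma krad_le_norm (n : ℕ) (hn : 1 ≤ n) (α γ s : ℝ) (σ : ℝ → ℝ) (hs : 0 < s)
    (hαn : α ≤ n) (hγ : 0 ≤ γ)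
    (hK : gMorreyNorm n s σ (brKernel n α γ) ≠ ⊤)
    {r : ℝ} (hr : 0 < r) :
    ENNReal.ofReal (krad n α γ r) * (volume (ball (0 : En n) 1)) ^ (1 / s) ≤
      ENNReal.ofReal (σ r) * gMorreyNorm n s σ (brKernel n α γ) := by
  set v := volume (ball (0 : En n) 1) with hv
  set NK := gMorreyNorm n s σ (brKernel n α γ) with hNK
  haveI : Nontrivial (En n) := Module.nontrivial_of_finrank_pos (R := ℝ)
    (by rw [finrank_euclideanSpace_fin]; omega)
  have hge := gMorreyNorm_ge n s σ (brKernel n α γ) (0 : En n) hr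
  have hint : ENNReal.ofReal ((krad n α γ r) ^ s) * volume (ball (0 : En n) r) ≤
      ∫⁻ x in ball (0 : En n) r, ENNReal.ofReal (|brKernel n α γ x| ^ s) := by
    rw [← setLIntegral_const (ball (0 : En n) r) (ENNReal.ofReal ((krad n α γ r) ^ s))]
    refine lintegral_mono_ae ?_
    have h0 : ∀ᵐ x : En n ∂(volume.restrict (ball (0 : En n) r)), x ≠ 0 := by
      refine ae_restrict_of_ae ?_
      refine measure_mono_null (fun x hx => ?_) (measure_singleton (0 : En n))
      simpa using not_not.mp hx
    have h1 : ∀ᵐ x : En n ∂(volume.restrict (ball (0 : En n) r)), x ∈ ball (0 : En n) r :=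
      ae_restrict_mem measurableSet_ball
    filter_upwards [h0, h1] with x hx0 hxball
    apply ENNReal.ofReal_le_ofReal
    have hxr : ‖x‖ < r := by simpa [mem_ball, dist_eq_norm] using hxball
    have hxpos : 0 < ‖x‖ := norm_pos_iff.mpr hx0
    have h2 : krad n α γ r ≤ krad n α γ ‖x‖ := krad_anti hαn hγ hxpos hxr.le
    have := krad_nonneg (n := n) (α := α) (γ := γ) hr.le
    rw [abs_of_nonneg (brKernel_nonneg n α γ x)]
    exact Real.rpow_le_rpow this (by exact_mod_cast h2) hs.le
  have hvol := volume_ball_En n (0 : En n) hr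
  have hkr : 0 < krad n α γ r := krad_pos hr
  have key : ENNReal.ofReal (krad n α γ r) * v ^ (1 / s) ≤
      (((ENNReal.ofReal r) ^ (n : ℝ))⁻¹ *
        ∫⁻ x in ball (0 : En n) r, ENNReal.ofReal (|brKernel n α γ x| ^ s)) ^ (1 / s) := by
    have h3 : ENNReal.ofReal ((krad n α γ r) ^ s) * v ≤
        ((ENNReal.ofReal r) ^ (n : ℝ))⁻¹ *
          ∫⁻ x in ball (0 : En n) r, ENNReal.ofReal (|brKernel n α γ x| ^ s) := by
      rw [ofReal_rpow_n hr]
      have hrn0 : ENNReal.ofReal (r ^ (n : ℕ)) ≠ 0 := by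
        simp [ENNReal.ofReal_eq_zero, not_le, pow_pos hr]
      have hrnt : ENNReal.ofReal (r ^ (n : ℕ)) ≠ ⊤ := ENNReal.ofReal_ne_top
      set B := ENNReal.ofReal (r ^ (n : ℕ))
      set I := ∫⁻ x in ball (0 : En n) r, ENNReal.ofReal (|brKernel n α γ x| ^ s) with hI
      calc ENNReal.ofReal (krad n α γ r ^ s) * v
          = B⁻¹ * (B * (ENNReal.ofReal (krad n α γ r ^ s) * v)) := by
            rw [← mul_assoc, ENNReal.inv_mul_cancel hrn0 hrnt, one_mul]
        _ = B⁻¹ * (ENNReal.ofReal (krad n α γ r ^ s) * (B * v)) := by ring_nf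
        _ = B⁻¹ * (ENNReal.ofReal (krad n α γ r ^ s) * volume (ball (0 : En n) r)) := by
            rw [← hvol]
        _ ≤ B⁻¹ * I := mul_le_mul_right hint _
    calc ENNReal.ofReal (krad n α γ r) * v ^ (1 / s)
        = (ENNReal.ofReal ((krad n α γ r) ^ s) * v) ^ (1 / s) := by
          rw [ENNReal.mul_rpow_of_nonneg _ _ (by positivity),
            ← ENNReal.ofReal_rpow_of_pos hkr, ← ENNReal.rpow_mul, mul_one_div,
            div_self hs.ne', ENNReal.rpow_one]
      _ ≤ _ := ENNReal.rpow_le_rpow h3 (by positivity)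
  by_cases hσ0 : ENNReal.ofReal (σ r) = 0
  · exfalso
    apply hK
    refine top_le_iff.mp ?_
    calc (⊤ : ℝ≥0∞) = (ENNReal.ofReal (σ r))⁻¹ * (ENNReal.ofReal (krad n α γ r) * v ^ (1 / s)) := by
          rw [hσ0, ENNReal.inv_zero, ENNReal.top_mul]
          refine mul_ne_zero ?_ ?_
          · simp [ENNReal.ofReal_eq_zero, not_le, hkr]
          · exact (ENNReal.rpow_pos (vball_pos n) (vball_ne_top n)).ne'
      _ ≤ (ENNReal.ofReal (σ r))⁻¹ * (((ENNReal.ofReal r) ^ (n : ℝ))⁻¹ *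
            ∫⁻ x in ball (0 : En n) r, ENNReal.ofReal (|brKernel n α γ x| ^ s)) ^ (1 / s) :=
          mul_le_mul_right key _
      _ ≤ NK := hge
  · rw [← ENNReal.inv_mul_le_iff hσ0 ENNReal.ofReal_ne_top]
    calc (ENNReal.ofReal (σ r))⁻¹ * (ENNReal.ofReal (krad n α γ r) * v ^ (1 / s))
        ≤ (ENNReal.ofReal (σ r))⁻¹ * (((ENNReal.ofReal r) ^ (n : ℝ))⁻¹ *
            ∫⁻ x in ball (0 : En n) r, ENNReal.ofReal (|brKernel n α γ x| ^ s)) ^ (1 / s) :=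
          mul_le_mul_right key _
      _ ≤ NK := hge

section main

variable (n : ℕ) (hn : 1 ≤ n) (α γ s Cσ : ℝ) (σ : ℝ → ℝ)
  (hα0 : 0 < α) (hαn : α < n) (hγ : 0 < γ) (hs : 0 < s)
  (hCσ : 0 < Cσ) (hσ : ∀ r, 0 < r → σ r ≤ Cσ * r ^ (-α))
  (hK : gMorreyNorm n s σ (brKernel n α γ) ≠ ⊤)

include hn hα0 hαn hγ hs hCσ hσ hK

omit hα0 hCσ hσ in
lemma NK_pos : 0 < gMorreyNorm n s σ (brKernel n α γ) := by
  by_contra h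
  rw [not_lt, le_zero_iff] at h
  have := krad_le_norm n hn α γ s σ hs hαn.le hγ.le hK one_pos
  rw [h, mul_zero, le_zero_iff, mul_eq_zero] at this
  rcases this with h1 | h2
  · exact absurd h1 (by simp [ENNReal.ofReal_eq_zero, not_le, krad_pos one_pos])
  · exact absurd h2 (ENNReal.rpow_pos (vball_pos n) (vball_ne_top n)).ne'

omit hα0 in
lemma kernel_ptwise : ∃ e : ℝ, 0 < e ∧ ∀ r : ℝ, 0 < r →
    ENNReal.ofReal (krad n α γ r) ≤
      gMorreyNorm n s σ (brKernel n α γ) * ENNReal.ofReal e * ENNReal.ofReal (r ^ (-α)) := by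
  set NK := gMorreyNorm n s σ (brKernel n α γ)
  set w : ℝ≥0∞ := (volume (ball (0 : En n) 1)) ^ (1 / s) with hw
  have hw0 : w ≠ 0 := (ENNReal.rpow_pos (vball_pos n) (vball_ne_top n)).ne'
  have hwt : w ≠ ⊤ := ENNReal.rpow_ne_top_of_nonneg (by positivity) (vball_ne_top n)
  refine ⟨Cσ * (w⁻¹).toReal, ?_, ?_⟩
  · have : 0 < (w⁻¹).toReal := ENNReal.toReal_pos (by simp [hwt]) (by simp [hw0])
    positivity
  · intro r hr
    have h1 := krad_le_norm n hn α γ s σ hs hαn.le hγ.le hK hr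
    have h2 : ENNReal.ofReal (σ r) ≤ ENNReal.ofReal (Cσ * r ^ (-α)) :=
      ENNReal.ofReal_le_ofReal (hσ r hr)
    have h3 : ENNReal.ofReal (krad n α γ r) * w ≤ ENNReal.ofReal (Cσ * r ^ (-α)) * NK :=
      le_trans h1 (mul_le_mul_left h2 _)
    have h4 : ENNReal.ofReal (krad n α γ r) = ENNReal.ofReal (krad n α γ r) * w * w⁻¹ := by
      rw [mul_assoc, ENNReal.mul_inv_cancel hw0 hwt, mul_one]
    rw [h4]
    calc ENNReal.ofReal (krad n α γ r) * w * w⁻¹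
        ≤ ENNReal.ofReal (Cσ * r ^ (-α)) * NK * w⁻¹ := mul_le_mul_left h3 _
      _ = NK * (ENNReal.ofReal Cσ * w⁻¹) * ENNReal.ofReal (r ^ (-α)) := by
          rw [ENNReal.ofReal_mul hCσ.le]; ring
      _ = NK * ENNReal.ofReal (Cσ * (w⁻¹).toReal) * ENNReal.ofReal (r ^ (-α)) := by
          rw [ENNReal.ofReal_mul hCσ.le, ENNReal.ofReal_toReal (by simp [hw0])]

lemma two_alpha : (n : ℝ) ≤ 2 * α := by
  by_contra hcon
  rw [not_le] at hcon
  obtain ⟨e, he, hbd⟩ := kernel_ptwise n hn α γ s Cσ σ hαn hγ hs hCσ hσ hK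
  set NK := gMorreyNorm n s σ (brKernel n α γ)
  set c : ℝ := NK.toReal * e with hc
  have hc0 : 0 ≤ c := by positivity
  have hreal : ∀ r : ℝ, 0 < r → r ≤ 1 → r ^ (2 * α - n) ≤ c * 2 ^ γ := by
    intro r hr hr1
    have h1 := hbd r hr
    have h2 : NK * ENNReal.ofReal e = ENNReal.ofReal c := by
      rw [hc, ENNReal.ofReal_mul (by positivity), ENNReal.ofReal_toReal hK]
    rw [h2, ← ENNReal.ofReal_mul hc0] at h1
    have h3 : krad n α γ r ≤ c * r ^ (-α) :=
      (ENNReal.ofReal_le_ofReal_iff (by positivity)).mp h1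
    have h4 : (1 + r) ^ γ ≤ 2 ^ γ := Real.rpow_le_rpow (by linarith) (by linarith) hγ.le
    have h5 : r ^ (α - n) ≤ c * r ^ (-α) * 2 ^ γ := by
      have := krad_pos (n := n) (α := α) (γ := γ) hr
      unfold krad at h3 this
      have h1r : (0:ℝ) < (1 + r) ^ γ := Real.rpow_pos_of_pos (by linarith) _
      calc r ^ (α - n) = r ^ (α - n) / (1 + r) ^ γ * (1 + r) ^ γ := by field_simp
        _ ≤ c * r ^ (-α) * 2 ^ γ := by
            apply mul_le_mul h3 h4 (by positivity)
            have : (0:ℝ) < r ^ (-α) := Real.rpow_pos_of_pos hr _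
            positivity
    have h6 : r ^ (2 * α - n) = r ^ (α - n) * r ^ α := by
      rw [← Real.rpow_add hr]; ring_nf
    rw [h6]
    calc r ^ (α - n) * r ^ α ≤ c * r ^ (-α) * 2 ^ γ * r ^ α := by
          apply mul_le_mul_of_nonneg_right h5 (Real.rpow_nonneg hr.le _)
      _ = c * 2 ^ γ * (r ^ (-α) * r ^ α) := by ring
      _ = c * 2 ^ γ := by rw [← Real.rpow_add hr]; simp
  set c₂ : ℝ := c * 2 ^ γ + 2 with hc₂
  have hc₂1 : 1 < c₂ := by
    have : (0:ℝ) ≤ c * 2 ^ γ := by positivity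
    linarith
  set t : ℝ := 2 * α - n with ht
  have ht0 : t < 0 := by rw [ht]; linarith
  set r := c₂ ^ (1 / t) with hr
  have hr0 : 0 < r := Real.rpow_pos_of_pos (by linarith) _
  have hr1 : r ≤ 1 :=
    (Real.rpow_lt_one_of_one_lt_of_neg hc₂1 (by
      apply div_neg_of_pos_of_neg one_pos ht0)).le
  have hrt : r ^ t = c₂ := by
    rw [hr, ← Real.rpow_mul (by linarith), one_div_mul_cancel ht0.ne, Real.rpow_one]
  have := hreal r hr0 hr1
  rw [hrt] at this
  linarith

end main

lemma maximal_ball_bound (n : ℕ) (f : En n → ℝ) (x : En n) {ρ : ℝ} (hρ : 0 < ρ) :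
    ∫⁻ y in ball x ρ, ENNReal.ofReal |f y| ≤ maximalFn n f x * volume (ball x ρ) := by
  have hmem : x ∈ ball x ρ := mem_ball_self hρ
  have hle : (volume (ball x ρ))⁻¹ * ∫⁻ y in ball x ρ, ENNReal.ofReal |f y| ≤
      maximalFn n f x :=
    le_iSup_of_le x (le_iSup_of_le ρ (le_iSup_of_le hρ (le_iSup_of_le hmem le_rfl)))
  have hv0 : volume (ball x ρ) ≠ 0 := (measure_ball_pos _ _ hρ).ne'
  have hvt : volume (ball x ρ) ≠ ⊤ := measure_ball_lt_top.ne
  calc ∫⁻ y in ball x ρ, ENNReal.ofReal |f y|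
      = ((volume (ball x ρ))⁻¹ * ∫⁻ y in ball x ρ, ENNReal.ofReal |f y|) *
          volume (ball x ρ) := by
        rw [mul_comm, ← mul_assoc, ENNReal.mul_inv_cancel hv0 hvt, one_mul]
    _ ≤ maximalFn n f x * volume (ball x ρ) := mul_le_mul_left hle _

lemma holder_ball_bound (n : ℕ) (p₁ β Cφ : ℝ) (φ : ℝ → ℝ) (f : En n → ℝ)
    (hp1 : 1 < p₁) (hCφ : 0 < Cφ) (hφ : ∀ r, 0 < r → φ r ≤ Cφ * r ^ β)
    (hA : gMorreyNorm n p₁ φ f ≠ ⊤) (x : En n) {ρ : ℝ} (hρ : 0 < ρ) :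
    ∫⁻ y in ball x ρ, ENNReal.ofReal |f y| ≤
      gMorreyNorm n p₁ φ f * ENNReal.ofReal Cφ *
        (volume (ball (0 : En n) 1)) ^ (1 - 1/p₁) * ENNReal.ofReal (ρ ^ (β + n)) := by
  set A := gMorreyNorm n p₁ φ f with hAdef
  set J := ∫⁻ y in ball x ρ, ENNReal.ofReal (|f y| ^ p₁) with hJ
  set v := volume (ball (0 : En n) 1) with hv
  have hp10 : 0 < p₁ := by linarith
  have hstep1 : (((ENNReal.ofReal ρ) ^ (n : ℝ))⁻¹ * J) ^ (1/p₁) ≤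
      A * ENNReal.ofReal (Cφ * ρ ^ β) := by
    have hge := gMorreyNorm_ge n p₁ φ f x hρ
    by_cases hφ0 : ENNReal.ofReal (φ ρ) = 0
    · rw [hφ0, ENNReal.inv_zero] at hge
      rcases eq_or_ne ((((ENNReal.ofReal ρ) ^ (n : ℝ))⁻¹ * J) ^ (1/p₁)) 0 with h0 | h0
      · rw [h0]; exact zero_le
      · exfalso
        rw [ENNReal.top_mul h0] at hge
        exact hA (top_le_iff.mp hge)
    · have h1 : (((ENNReal.ofReal ρ) ^ (n : ℝ))⁻¹ * J) ^ (1/p₁) ≤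
          ENNReal.ofReal (φ ρ) * A := by
        rw [← ENNReal.inv_mul_le_iff hφ0 ENNReal.ofReal_ne_top]
        exact hge
      refine le_trans h1 ?_
      rw [mul_comm]
      exact mul_le_mul_right (ENNReal.ofReal_le_ofReal (hφ ρ hρ)) _
  have hρn0 : ((ENNReal.ofReal ρ) ^ (n : ℝ)) ≠ 0 := by
    rw [ofReal_rpow_n hρ]; simp [ENNReal.ofReal_eq_zero, not_le, pow_pos hρ]
  have hρnt : ((ENNReal.ofReal ρ) ^ (n : ℝ)) ≠ ⊤ := by
    rw [ofReal_rpow_n hρ]; exact ENNReal.ofReal_ne_top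
  have hstep2 : J ^ (1/p₁) ≤
      ((ENNReal.ofReal ρ) ^ (n : ℝ)) ^ (1/p₁) * (A * ENNReal.ofReal (Cφ * ρ ^ β)) := by
    have hJ2 : J = ((ENNReal.ofReal ρ) ^ (n : ℝ)) * (((ENNReal.ofReal ρ) ^ (n : ℝ))⁻¹ * J) := by
      rw [← mul_assoc, ENNReal.mul_inv_cancel hρn0 hρnt, one_mul]
    rw [hJ2, ENNReal.mul_rpow_of_nonneg _ _ (by positivity)]
    exact mul_le_mul_right hstep1 _
  set q := Real.conjExponent p₁ with hq
  have hpq : p₁.HolderConjugate q := Real.HolderConjugate.conjExponent hp1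
  obtain ⟨h, hmeas, hle, heq⟩ :=
    exists_measurable_le_lintegral_eq (volume.restrict (ball x ρ))
      (fun y => ENNReal.ofReal |f y|)
  have holder : ∫⁻ y in ball x ρ, ENNReal.ofReal |f y| ≤
      J ^ (1/p₁) * (volume (ball x ρ)) ^ (1/q) := by
    rw [heq]
    have hH := ENNReal.lintegral_mul_le_Lp_mul_Lq (volume.restrict (ball x ρ)) hpq
      hmeas.aemeasurable aemeasurable_const (g := fun _ => (1:ℝ≥0∞))
    simp only [mul_one, Pi.mul_apply] at hH
    have h1q : (∫⁻ _ in ball x ρ, (1:ℝ≥0∞) ^ q) = volume (ball x ρ) := by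
      simp [ENNReal.one_rpow]
    have hJle : (∫⁻ y in ball x ρ, h y ^ p₁) ≤ J := by
      refine lintegral_mono fun y => ?_
      have hy : h y ≤ ENNReal.ofReal |f y| := hle y
      calc h y ^ p₁ ≤ (ENNReal.ofReal |f y|) ^ p₁ := ENNReal.rpow_le_rpow hy hp10.le
        _ = ENNReal.ofReal (|f y| ^ p₁) := ENNReal.ofReal_rpow_of_nonneg (abs_nonneg _) hp10.le
    calc (∫⁻ y in ball x ρ, h y) ≤
        (∫⁻ y in ball x ρ, h y ^ p₁) ^ (1/p₁) * (∫⁻ _ in ball x ρ, (1:ℝ≥0∞) ^ q) ^ (1/q) := hH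
      _ ≤ J ^ (1/p₁) * (volume (ball x ρ)) ^ (1/q) := by
          rw [h1q]
          exact mul_le_mul_left (ENNReal.rpow_le_rpow hJle (by positivity)) _
  have hvol : volume (ball x ρ) = ((ENNReal.ofReal ρ) ^ (n : ℝ)) * v := by
    rw [volume_ball_En n x hρ, ofReal_rpow_n hρ]
  have hq0 : (0:ℝ) ≤ 1/q := hpq.symm.one_div_nonneg
  have hsum : (1/p₁) + (1/q) = 1 := by
    have := hpq.inv_add_inv_eq_one
    rw [one_div, one_div]; linarith
  calc ∫⁻ y in ball x ρ, ENNReal.ofReal |f y|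
      ≤ J ^ (1/p₁) * (volume (ball x ρ)) ^ (1/q) := holder
    _ ≤ (((ENNReal.ofReal ρ) ^ (n : ℝ)) ^ (1/p₁) * (A * ENNReal.ofReal (Cφ * ρ ^ β))) *
          ((((ENNReal.ofReal ρ) ^ (n : ℝ)) * v) ^ (1/q)) := by
        rw [← hvol]
        exact mul_le_mul_left hstep2 _
    _ = A * ENNReal.ofReal Cφ * v ^ (1/q) *
          (((ENNReal.ofReal ρ) ^ (n : ℝ)) ^ (1/p₁) * ((ENNReal.ofReal ρ) ^ (n : ℝ)) ^ (1/q) *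
            ENNReal.ofReal (ρ ^ β)) := by
        rw [ENNReal.mul_rpow_of_nonneg _ _ hq0, ENNReal.ofReal_mul hCφ.le]
        ring
    _ = A * ENNReal.ofReal Cφ * v ^ (1/q) * ENNReal.ofReal (ρ ^ (β + n)) := by
        rw [← ENNReal.rpow_add_of_nonneg _ _ (by positivity) hq0, hsum,
          ENNReal.rpow_one, ENNReal.ofReal_rpow_of_pos hρ, ← ENNReal.ofReal_mul
          (by positivity), ← Real.rpow_add hρ, add_comm (n:ℝ) β]
    _ = A * ENNReal.ofReal Cφ * v ^ (1 - 1/p₁) * ENNReal.ofReal (ρ ^ (β + n)) := by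
        have h11 : 1/q = 1 - 1/p₁ := by linarith
        rw [h11]

lemma annulus_est (n : ℕ) (α γ : ℝ) (hαn : α ≤ (n:ℝ)) (hγ : 0 ≤ γ) (f : En n → ℝ) (x : En n)
    {P : Set (En n)} {t t' : ℝ} (ht : 0 < t) (hPm : MeasurableSet P)
    (hdist : ∀ y ∈ P, t ≤ dist y x) (hsub : P ⊆ ball x t') :
    ∫⁻ y in P, ENNReal.ofReal (brKernel n α γ (x - y)) * ENNReal.ofReal |f y| ≤
      ENNReal.ofReal (krad n α γ t) * ∫⁻ y in ball x t', ENNReal.ofReal |f y| := by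
  calc ∫⁻ y in P, ENNReal.ofReal (brKernel n α γ (x - y)) * ENNReal.ofReal |f y|
      ≤ ∫⁻ y in P, ENNReal.ofReal (krad n α γ t) * ENNReal.ofReal |f y| := by
        refine lintegral_mono_ae ?_
        filter_upwards [ae_restrict_mem hPm] with y hy
        refine mul_le_mul_left (ENNReal.ofReal_le_ofReal ?_) _
        rw [brKernel_eq]
        have h1 : t ≤ ‖x - y‖ := by
          rw [← dist_eq_norm, dist_comm]
          exact hdist y hy
        exact krad_anti hαn hγ ht h1
    _ = ENNReal.ofReal (krad n α γ t) * ∫⁻ y in P, ENNReal.ofReal |f y| :=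
        lintegral_const_mul' _ _ ENNReal.ofReal_ne_top
    _ ≤ ENNReal.ofReal (krad n α γ t) * ∫⁻ y in ball x t', ENNReal.ofReal |f y| :=
        mul_le_mul_right (lintegral_mono_set hsub) _

lemma rid_near (R α nn : ℝ) (hR : 0 < R) (j : ℕ) :
    (R / 2 ^ ((j:ℝ)+1)) ^ (-α) * (2 * (R / 2 ^ (j:ℝ))) ^ nn =
      2 ^ (nn+α) * R ^ (nn-α) * ((2:ℝ) ^ (α-nn)) ^ j := by
  have h2 : (0:ℝ) < 2 := two_pos
  have hp : ∀ x : ℝ, (0:ℝ) < 2 ^ x := fun x => Real.rpow_pos_of_pos h2 x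
  rw [← Real.rpow_natCast ((2:ℝ) ^ (α-nn)) j, ← Real.rpow_mul h2.le]
  rw [Real.div_rpow hR.le (hp _).le, Real.mul_rpow h2.le (by positivity),
    Real.div_rpow hR.le (hp _).le, ← Real.rpow_mul h2.le, ← Real.rpow_mul h2.le]
  simp only [Real.rpow_def_of_pos h2, Real.rpow_def_of_pos hR, ← Real.exp_sub,
    ← Real.exp_add, Real.exp_eq_exp]
  ring

lemma rid_far (R α β nn : ℝ) (hR : 0 < R) (j : ℕ) :
    (R * 2 ^ (j:ℝ)) ^ (-α) * (R * 2 ^ ((j:ℝ)+1)) ^ (β+nn) =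
      2 ^ (β+nn) * R ^ (nn-α+β) * ((2:ℝ) ^ (nn-α+β)) ^ j := by
  have h2 : (0:ℝ) < 2 := two_pos
  have hp : ∀ x : ℝ, (0:ℝ) < 2 ^ x := fun x => Real.rpow_pos_of_pos h2 x
  rw [← Real.rpow_natCast ((2:ℝ) ^ (nn-α+β)) j, ← Real.rpow_mul h2.le]
  rw [Real.mul_rpow hR.le (hp _).le, Real.mul_rpow hR.le (hp _).le,
    ← Real.rpow_mul h2.le, ← Real.rpow_mul h2.le]
  simp only [Real.rpow_def_of_pos h2, Real.rpow_def_of_pos hR, ← Real.exp_sub,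
    ← Real.exp_add, Real.exp_eq_exp]
  ring

lemma rid_bal (m a c : ℝ) (hm : 0 < m) (ha : 0 < a) :
    m * ((m/a) ^ c) = m ^ (1+c) * a ^ (-c) := by
  rw [Real.div_rpow hm.le ha.le, Real.rpow_add hm, Real.rpow_one, Real.rpow_neg ha.le,
    div_eq_mul_inv]
  ring

lemma rid_bal' (m a c : ℝ) (hm : 0 < m) (ha : 0 < a) :
    a * ((m/a) ^ (c+1)) = m ^ (1+c) * a ^ (-c) := by
  have hd : 0 < m / a := div_pos hm ha
  rw [Real.rpow_add hd, Real.rpow_one, Real.div_rpow hm.le ha.le, Real.rpow_add hm,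
    Real.rpow_one, Real.rpow_neg ha.le, div_eq_mul_inv, div_eq_mul_inv]
  field_simp

/-- Hedberg-type inequality with the generalized Morrey norm of
the kernel. -/
theorem besselRiesz_hedberg_gKernel (n : ℕ) (hn : 1 ≤ n)
    (α γ s p₁ β Cσ Cφ : ℝ) (σ φ : ℝ → ℝ)
    (hα0 : 0 < α) (hαn : α < n) (hγ : 0 < γ)
    (hs1 : 1 ≤ s) (hs2 : s < (n : ℝ) / ((n : ℝ) - α))
    (hσdbl : ∃ Cd > (0 : ℝ), ∀ r v : ℝ, 0 < v → 1 / 2 ≤ r / v → r / v ≤ 2 →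
      Cd⁻¹ ≤ σ r / σ v ∧ σ r / σ v ≤ Cd)
    (hCσ : 0 < Cσ) (hσ : ∀ r, 0 < r → σ r ≤ Cσ * r ^ (-α))
    (hK : gMorreyNorm n s σ (brKernel n α γ) < ⊤)
    (hp1 : 1 < p₁) (hp2 : p₁ < (n : ℝ) / α)
    (hβ1 : -(n : ℝ) / p₁ < β) (hβ2 : β < -α)
    (hCφ : 0 < Cφ) (hφ : ∀ r, 0 < r → φ r ≤ Cφ * r ^ β) :
    ∃ C' > (0 : ℝ), ∀ f : En n → ℝ, ∀ x : En n,
      gMorreyNorm n p₁ φ f < ⊤ → 0 < gMorreyNorm n p₁ φ f → 0 < maximalFn n f x →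
        ENNReal.ofReal |brOp n α γ f x| ≤
          ENNReal.ofReal C' * gMorreyNorm n s σ (brKernel n α γ) *
            (gMorreyNorm n p₁ φ f) ^ ((α - n) / β) *
            (maximalFn n f x) ^ (1 + ((n : ℝ) - α) / β) := by
  have hKne : gMorreyNorm n s σ (brKernel n α γ) ≠ ⊤ := hK.ne
  have hs0 : (0:ℝ) < s := by linarith
  obtain ⟨e, he, hker⟩ := kernel_ptwise n hn α γ s Cσ σ hαn hγ hs0 hCσ hσ hKne
  have hNK0 : 0 < gMorreyNorm n s σ (brKernel n α γ) :=
    NK_pos n hn α γ s σ hαn hγ hs0 hKne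
  have h2α : (n : ℝ) ≤ 2 * α := two_alpha n hn α γ s Cσ σ hα0 hαn hγ hs0 hCσ hσ hKne
  set NK := gMorreyNorm n s σ (brKernel n α γ) with hNKdef
  have hβneg : β < 0 := by linarith
  have hδ1 : (0:ℝ) < (n:ℝ) - α := by linarith
  have hδ2 : (n:ℝ) - α + β < 0 := by linarith
  set c : ℝ := ((n:ℝ) - α) / β with hc
  have hexp : (0:ℝ) < 1 + c := by
    have hβ0 : β ≠ 0 := hβneg.ne
    have heq : 1 + c = ((n:ℝ) - α + β)/β := by rw [hc]; field_simp; ring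
    rw [heq]
    exact div_pos_iff.mpr (Or.inr ⟨by linarith, hβneg⟩)
  -- constants
  set v := volume (ball (0 : En n) 1) with hv
  have hvt : v ≠ ⊤ := vball_ne_top n
  have hv0 : v ≠ 0 := (vball_pos n).ne'
  set V' : ℝ≥0∞ := v ^ (1 - 1/p₁) with hV'
  have hp1d : 1/p₁ ≤ 1 := by
    rw [div_le_one (by linarith : (0:ℝ) < p₁)]; linarith
  have hV't : V' ≠ ⊤ := ENNReal.rpow_ne_top_of_nonneg (by linarith) hvt
  set q1 : ℝ≥0∞ := ENNReal.ofReal ((2:ℝ) ^ (α - (n:ℝ))) with hq1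
  set q2 : ℝ≥0∞ := ENNReal.ofReal ((2:ℝ) ^ ((n:ℝ) - α + β)) with hq2
  have hq1lt : q1 < 1 := by
    rw [hq1]
    exact ENNReal.ofReal_lt_one.mpr
      (Real.rpow_lt_one_of_one_lt_of_neg one_lt_two (by linarith))
  have hq2lt : q2 < 1 := by
    rw [hq2]
    exact ENNReal.ofReal_lt_one.mpr (Real.rpow_lt_one_of_one_lt_of_neg one_lt_two hδ2)
  set G1 : ℝ≥0∞ := (1 - q1)⁻¹ with hG1
  set G2 : ℝ≥0∞ := (1 - q2)⁻¹ with hG2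
  have hG1t : G1 ≠ ⊤ := ENNReal.inv_ne_top.mpr (tsub_pos_of_lt hq1lt).ne'
  have hG2t : G2 ≠ ⊤ := ENNReal.inv_ne_top.mpr (tsub_pos_of_lt hq2lt).ne'
  set W1 : ℝ≥0∞ := ENNReal.ofReal e * v * ENNReal.ofReal ((2:ℝ) ^ ((n:ℝ)+α)) * G1 with hW1
  set W2 : ℝ≥0∞ := ENNReal.ofReal e * ENNReal.ofReal Cφ * V' *
    ENNReal.ofReal ((2:ℝ) ^ (β+(n:ℝ))) * G2 with hW2
  set W : ℝ≥0∞ := W1 + W2 with hW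
  have hW1t : W1 ≠ ⊤ := by
    rw [hW1]
    exact ENNReal.mul_ne_top (ENNReal.mul_ne_top (ENNReal.mul_ne_top
      ENNReal.ofReal_ne_top hvt) ENNReal.ofReal_ne_top) hG1t
  have hW2t : W2 ≠ ⊤ := by
    rw [hW2]
    exact ENNReal.mul_ne_top (ENNReal.mul_ne_top (ENNReal.mul_ne_top (ENNReal.mul_ne_top
      ENNReal.ofReal_ne_top ENNReal.ofReal_ne_top) hV't) ENNReal.ofReal_ne_top) hG2t
  have hWt : W ≠ ⊤ := ENNReal.add_ne_top.mpr ⟨hW1t, hW2t⟩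
  refine ⟨W.toReal + 1, by positivity, ?_⟩
  intro f x hAfin hApos hMpos
  set A := gMorreyNorm n p₁ φ f with hAdef
  set M := maximalFn n f x with hMdef
  set g : En n → ℝ≥0∞ := fun y => ENNReal.ofReal |f y| with hg
  set F : En n → ℝ≥0∞ := fun y => ENNReal.ofReal (brKernel n α γ (x - y)) * g y with hF
  -- Step A : reduce to the lintegral
  have hstepA : ENNReal.ofReal |brOp n α γ f x| ≤ ∫⁻ y, F y := by
    rw [← Real.enorm_eq_ofReal_abs]
    refine le_trans
      (enorm_integral_le_lintegral_enorm (fun y => brKernel n α γ (x - y) * f y)) ?_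
    refine lintegral_mono fun y => ?_
    rw [Real.enorm_eq_ofReal_abs, abs_mul, abs_of_nonneg (brKernel_nonneg n α γ _),
      ENNReal.ofReal_mul (brKernel_nonneg n α γ _)]
  -- case M = ⊤
  by_cases hMtop : M = ⊤
  · have hne : ENNReal.ofReal (W.toReal + 1) * NK * A ^ ((α - (n:ℝ))/β) ≠ 0 := by
      refine mul_ne_zero (mul_ne_zero ?_ hNK0.ne') ?_
      · simp only [ne_eq, ENNReal.ofReal_eq_zero, not_le]
        positivity
      · exact (ENNReal.rpow_pos hApos hAfin.ne).ne'
    rw [hMtop, ENNReal.top_rpow_of_pos hexp, ENNReal.mul_top hne]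
    exact le_top
  -- main case
  set m := M.toReal with hm'
  set aR := A.toReal with ha'
  have hm : 0 < m := ENNReal.toReal_pos hMpos.ne' hMtop
  have ha : 0 < aR := ENNReal.toReal_pos hApos.ne' hAfin.ne
  have hma : 0 < m / aR := div_pos hm ha
  set R : ℝ := (m / aR) ^ (1/β) with hR
  have hR0 : 0 < R := Real.rpow_pos_of_pos hma _
  -- annuli
  set Ns : ℕ → Set (En n) := fun j =>
    {y | R / 2 ^ ((j:ℝ)+1) < dist y x ∧ dist y x ≤ R / 2 ^ (j:ℝ)} with hNs
  set Ss : ℕ → Set (En n) := fun j =>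
    {y | R * 2 ^ (j:ℝ) ≤ dist y x ∧ dist y x < R * 2 ^ ((j:ℝ)+1)} with hSs
  have hdistm : Measurable fun y : En n => dist y x :=
    (continuous_id.dist continuous_const).measurable
  have hNm : ∀ j, MeasurableSet (Ns j) := fun j => hdistm measurableSet_Ioc
  have hSm : ∀ j, MeasurableSet (Ss j) := fun j => hdistm measurableSet_Ico
  have hcover : (Set.univ : Set (En n)) ⊆ (({x} : Set (En n)) ∪ ⋃ j, Ns j) ∪ ⋃ j, Ss j := by
    intro y _
    by_cases hyx : y = x
    · exact Or.inl (Or.inl (by simp [hyx]))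
    · have ht : 0 < dist y x := dist_pos.mpr hyx
      rcases lt_or_ge (dist y x) R with hlt | hge
      · have hu : 1 ≤ R / dist y x := (one_le_div ht).mpr hlt.le
        obtain ⟨j, hj1, hj2⟩ := exists_nat_pow_near hu one_lt_two
        have e1 : (2:ℝ) ^ ((j:ℝ)+1) = 2 ^ (j+1 : ℕ) := by
          rw [show ((j:ℝ)+1) = ((j+1 : ℕ):ℝ) by push_cast; ring, Real.rpow_natCast]
        have e2 : (2:ℝ) ^ ((j:ℝ)) = 2 ^ (j : ℕ) := Real.rpow_natCast 2 j
        have hp1' : (0:ℝ) < 2 ^ (j+1 : ℕ) := by positivity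
        have hp2' : (0:ℝ) < 2 ^ (j : ℕ) := by positivity
        have hA1 := (div_lt_iff₀ ht).mp hj2
        have hA2 := (le_div_iff₀ ht).mp hj1
        refine Or.inl (Or.inr (Set.mem_iUnion.mpr ⟨j, ?_, ?_⟩))
        · rw [e1, div_lt_iff₀ hp1']
          linarith
        · rw [e2, le_div_iff₀ hp2']
          linarith
      · have hu : 1 ≤ dist y x / R := (one_le_div hR0).mpr hge
        obtain ⟨j, hj1, hj2⟩ := exists_nat_pow_near hu one_lt_two
        have e1 : (2:ℝ) ^ ((j:ℝ)+1) = 2 ^ (j+1 : ℕ) := by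
          rw [show ((j:ℝ)+1) = ((j+1 : ℕ):ℝ) by push_cast; ring, Real.rpow_natCast]
        have e2 : (2:ℝ) ^ ((j:ℝ)) = 2 ^ (j : ℕ) := Real.rpow_natCast 2 j
        have hA1 := (le_div_iff₀ hR0).mp hj1
        have hA2 := (div_lt_iff₀ hR0).mp hj2
        refine Or.inr (Set.mem_iUnion.mpr ⟨j, ?_, ?_⟩)
        · rw [e2]; linarith
        · rw [e1]; linarith
  haveI : Nontrivial (En n) := Module.nontrivial_of_finrank_pos (R := ℝ)
    (by rw [finrank_euclideanSpace_fin]; omega)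
  have hdecomp : (∫⁻ y, F y) ≤ (∑' j, ∫⁻ y in Ns j, F y) + ∑' j, ∫⁻ y in Ss j, F y := by
    have hsing : ∫⁻ y in ({x} : Set (En n)), F y = 0 := by
      rw [Measure.restrict_eq_zero.mpr (measure_singleton x), lintegral_zero_measure]
    calc ∫⁻ y, F y = ∫⁻ y in Set.univ, F y := (setLIntegral_univ _).symm
      _ ≤ ∫⁻ y in (({x} : Set (En n)) ∪ ⋃ j, Ns j) ∪ ⋃ j, Ss j, F y :=
          lintegral_mono_set hcover
      _ ≤ (∫⁻ y in (({x} : Set (En n)) ∪ ⋃ j, Ns j), F y) + ∫⁻ y in ⋃ j, Ss j, F y :=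
          lintegral_union_le _ _ _
      _ ≤ ((∫⁻ y in ({x} : Set (En n)), F y) + ∫⁻ y in ⋃ j, Ns j, F y) +
            ∫⁻ y in ⋃ j, Ss j, F y :=
          add_le_add_left (lintegral_union_le _ _ _) _
      _ = (∫⁻ y in ⋃ j, Ns j, F y) + ∫⁻ y in ⋃ j, Ss j, F y := by rw [hsing, zero_add]
      _ ≤ (∑' j, ∫⁻ y in Ns j, F y) + ∑' j, ∫⁻ y in Ss j, F y :=
          add_le_add (lintegral_iUnion_le _ _) (lintegral_iUnion_le _ _)
  -- near bound
  have hnear : ∀ j : ℕ, ∫⁻ y in Ns j, F y ≤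
      (NK * ENNReal.ofReal e * M * v *
        ENNReal.ofReal ((2:ℝ) ^ ((n:ℝ)+α) * R ^ ((n:ℝ)-α))) * q1 ^ j := by
    intro j
    have hpj : (0:ℝ) < 2 ^ (j:ℝ) := Real.rpow_pos_of_pos two_pos _
    have hpj1 : (0:ℝ) < 2 ^ ((j:ℝ)+1) := Real.rpow_pos_of_pos two_pos _
    have ht0 : 0 < R / 2 ^ ((j:ℝ)+1) := by positivity
    have ht'0 : 0 < 2 * (R / 2 ^ (j:ℝ)) := by positivity
    have hsub : Ns j ⊆ ball x (2 * (R / 2 ^ (j:ℝ))) := by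
      intro y hy
      have h2 : dist y x ≤ R / 2 ^ (j:ℝ) := hy.2
      have h3 : 0 < R / 2 ^ (j:ℝ) := by positivity
      rw [mem_ball]
      linarith
    have h1 := annulus_est n α γ hαn.le hγ.le f x ht0 (hNm j)
      (fun y hy => hy.1.le) hsub
    have h2 := hker _ ht0
    have h3 := maximal_ball_bound n f x ht'0
    have h4 : volume (ball x (2 * (R / 2 ^ (j:ℝ)))) =
        ENNReal.ofReal ((2 * (R / 2 ^ (j:ℝ))) ^ (n:ℕ)) * v := volume_ball_En n x ht'0
    calc ∫⁻ y in Ns j, F y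
        ≤ ENNReal.ofReal (krad n α γ (R / 2 ^ ((j:ℝ)+1))) *
            ∫⁻ y in ball x (2 * (R / 2 ^ (j:ℝ))), g y := h1
      _ ≤ (NK * ENNReal.ofReal e * ENNReal.ofReal ((R / 2 ^ ((j:ℝ)+1)) ^ (-α))) *
            (M * volume (ball x (2 * (R / 2 ^ (j:ℝ))))) := mul_le_mul' h2 h3
      _ = (NK * ENNReal.ofReal e * M * v) *
            (ENNReal.ofReal ((R / 2 ^ ((j:ℝ)+1)) ^ (-α)) *
              ENNReal.ofReal ((2 * (R / 2 ^ (j:ℝ))) ^ (n:ℕ))) := by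
          rw [h4]; ring
      _ = (NK * ENNReal.ofReal e * M * v) *
            (ENNReal.ofReal ((2:ℝ) ^ ((n:ℝ)+α) * R ^ ((n:ℝ)-α)) * q1 ^ j) := by
          have hsplit : ENNReal.ofReal ((R / 2 ^ ((j:ℝ)+1)) ^ (-α)) *
              ENNReal.ofReal ((2 * (R / 2 ^ (j:ℝ))) ^ (n:ℕ)) =
              ENNReal.ofReal ((2:ℝ) ^ ((n:ℝ)+α) * R ^ ((n:ℝ)-α)) * q1 ^ j := by
            rw [← ENNReal.ofReal_mul (Real.rpow_nonneg ht0.le _),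
              ← Real.rpow_natCast (2 * (R / 2 ^ (j:ℝ))) n, rid_near R α (n:ℝ) hR0 j,
              ENNReal.ofReal_mul (mul_nonneg
                (Real.rpow_nonneg (by norm_num : (0:ℝ) ≤ 2) ((n:ℝ)+α))
                (Real.rpow_nonneg hR0.le ((n:ℝ)-α))),
              ENNReal.ofReal_pow (Real.rpow_nonneg (by norm_num : (0:ℝ) ≤ 2) (α-(n:ℝ))), hq1]
          rw [hsplit]
      _ = _ := by ring
  -- far bound
  have hfar : ∀ j : ℕ, ∫⁻ y in Ss j, F y ≤
      (NK * ENNReal.ofReal e * (A * ENNReal.ofReal Cφ * V') *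
        ENNReal.ofReal ((2:ℝ) ^ (β+(n:ℝ)) * R ^ ((n:ℝ)-α+β))) * q2 ^ j := by
    intro j
    have hpj : (0:ℝ) < 2 ^ (j:ℝ) := Real.rpow_pos_of_pos two_pos _
    have hpj1 : (0:ℝ) < 2 ^ ((j:ℝ)+1) := Real.rpow_pos_of_pos two_pos _
    have ht0 : 0 < R * 2 ^ (j:ℝ) := by positivity
    have ht'0 : 0 < R * 2 ^ ((j:ℝ)+1) := by positivity
    have hsub : Ss j ⊆ ball x (R * 2 ^ ((j:ℝ)+1)) := fun y hy => mem_ball.mpr hy.2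
    have h1 := annulus_est n α γ hαn.le hγ.le f x ht0 (hSm j)
      (fun y hy => hy.1) hsub
    have h2 := hker _ ht0
    have h3 := holder_ball_bound n p₁ β Cφ φ f hp1 hCφ hφ hAfin.ne x ht'0
    calc ∫⁻ y in Ss j, F y
        ≤ ENNReal.ofReal (krad n α γ (R * 2 ^ (j:ℝ))) *
            ∫⁻ y in ball x (R * 2 ^ ((j:ℝ)+1)), g y := h1
      _ ≤ (NK * ENNReal.ofReal e * ENNReal.ofReal ((R * 2 ^ (j:ℝ)) ^ (-α))) *
            (A * ENNReal.ofReal Cφ * V' *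
              ENNReal.ofReal ((R * 2 ^ ((j:ℝ)+1)) ^ (β+(n:ℝ)))) := mul_le_mul' h2 h3
      _ = (NK * ENNReal.ofReal e * (A * ENNReal.ofReal Cφ * V')) *
            (ENNReal.ofReal ((R * 2 ^ (j:ℝ)) ^ (-α)) *
              ENNReal.ofReal ((R * 2 ^ ((j:ℝ)+1)) ^ (β+(n:ℝ)))) := by ring
      _ = (NK * ENNReal.ofReal e * (A * ENNReal.ofReal Cφ * V')) *
            (ENNReal.ofReal ((2:ℝ) ^ (β+(n:ℝ)) * R ^ ((n:ℝ)-α+β)) * q2 ^ j) := by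
          have hsplit : ENNReal.ofReal ((R * 2 ^ (j:ℝ)) ^ (-α)) *
              ENNReal.ofReal ((R * 2 ^ ((j:ℝ)+1)) ^ (β+(n:ℝ))) =
              ENNReal.ofReal ((2:ℝ) ^ (β+(n:ℝ)) * R ^ ((n:ℝ)-α+β)) * q2 ^ j := by
            rw [← ENNReal.ofReal_mul (Real.rpow_nonneg ht0.le _),
              rid_far R α β (n:ℝ) hR0 j,
              ENNReal.ofReal_mul (mul_nonneg
                (Real.rpow_nonneg (by norm_num : (0:ℝ) ≤ 2) (β+(n:ℝ)))
                (Real.rpow_nonneg hR0.le ((n:ℝ)-α+β))),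
              ENNReal.ofReal_pow (Real.rpow_nonneg (by norm_num : (0:ℝ) ≤ 2) ((n:ℝ)-α+β)), hq2]
          rw [hsplit]
      _ = _ := by ring
  -- sum up
  have hnearsum : (∑' j, ∫⁻ y in Ns j, F y) ≤
      NK * W1 * (M * ENNReal.ofReal (R ^ ((n:ℝ)-α))) := by
    calc (∑' j, ∫⁻ y in Ns j, F y)
        ≤ ∑' j, (NK * ENNReal.ofReal e * M * v *
            ENNReal.ofReal ((2:ℝ) ^ ((n:ℝ)+α) * R ^ ((n:ℝ)-α))) * q1 ^ j :=
          ENNReal.tsum_le_tsum hnear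
      _ = (NK * ENNReal.ofReal e * M * v *
            ENNReal.ofReal ((2:ℝ) ^ ((n:ℝ)+α) * R ^ ((n:ℝ)-α))) * ∑' j, q1 ^ j :=
          ENNReal.tsum_mul_left
      _ = NK * W1 * (M * ENNReal.ofReal (R ^ ((n:ℝ)-α))) := by
          rw [ENNReal.tsum_geometric, ← hG1, hW1,
            ENNReal.ofReal_mul (Real.rpow_nonneg (by norm_num : (0:ℝ) ≤ 2) ((n:ℝ)+α))]
          ring
  have hfarsum : (∑' j, ∫⁻ y in Ss j, F y) ≤
      NK * W2 * (A * ENNReal.ofReal (R ^ ((n:ℝ)-α+β))) := by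
    calc (∑' j, ∫⁻ y in Ss j, F y)
        ≤ ∑' j, (NK * ENNReal.ofReal e * (A * ENNReal.ofReal Cφ * V') *
            ENNReal.ofReal ((2:ℝ) ^ (β+(n:ℝ)) * R ^ ((n:ℝ)-α+β))) * q2 ^ j :=
          ENNReal.tsum_le_tsum hfar
      _ = (NK * ENNReal.ofReal e * (A * ENNReal.ofReal Cφ * V') *
            ENNReal.ofReal ((2:ℝ) ^ (β+(n:ℝ)) * R ^ ((n:ℝ)-α+β))) * ∑' j, q2 ^ j :=
          ENNReal.tsum_mul_left
      _ = NK * W2 * (A * ENNReal.ofReal (R ^ ((n:ℝ)-α+β))) := by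
          rw [ENNReal.tsum_geometric, ← hG2, hW2,
            ENNReal.ofReal_mul (Real.rpow_nonneg (by norm_num : (0:ℝ) ≤ 2) (β+(n:ℝ)))]
          ring
  -- balance
  set P : ℝ := m ^ (1+c) * aR ^ (-c) with hP
  have hbal1 : M * ENNReal.ofReal (R ^ ((n:ℝ)-α)) = ENNReal.ofReal P := by
    have hRr : R ^ ((n:ℝ)-α) = (m/aR) ^ c := by
      rw [hR, ← Real.rpow_mul hma.le, show 1/β * ((n:ℝ)-α) = c by rw [hc]; ring]
    rw [hRr, hP, ← rid_bal m aR c hm ha, show M = ENNReal.ofReal m by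
      rw [hm', ENNReal.ofReal_toReal hMtop], ← ENNReal.ofReal_mul hm.le]
  have hbal2 : A * ENNReal.ofReal (R ^ ((n:ℝ)-α+β)) = ENNReal.ofReal P := by
    have hRr : R ^ ((n:ℝ)-α+β) = (m/aR) ^ (c+1) := by
      rw [hR, ← Real.rpow_mul hma.le, show 1/β * ((n:ℝ)-α+β) = c+1 by
        rw [hc, one_div_mul_eq_div, add_div, div_self hβneg.ne]]
    rw [hRr, hP, ← rid_bal' m aR c hm ha, show A = ENNReal.ofReal aR by
      rw [ha', ENNReal.ofReal_toReal hAfin.ne], ← ENNReal.ofReal_mul ha.le]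
  -- final RHS computation
  have hRHS : ENNReal.ofReal (W.toReal + 1) * NK * A ^ ((α - (n:ℝ))/β) * M ^ (1 + ((n:ℝ)-α)/β) =
      ENNReal.ofReal (W.toReal + 1) * NK * ENNReal.ofReal P := by
    have hA' : A ^ ((α - (n:ℝ))/β) = ENNReal.ofReal (aR ^ (-c)) := by
      rw [show A = ENNReal.ofReal aR by rw [ha', ENNReal.ofReal_toReal hAfin.ne],
        ENNReal.ofReal_rpow_of_pos ha, show (α - (n:ℝ))/β = -c by rw [hc]; ring]
    have hM' : M ^ (1 + ((n:ℝ)-α)/β) = ENNReal.ofReal (m ^ (1+c)) := by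
      rw [show M = ENNReal.ofReal m by rw [hm', ENNReal.ofReal_toReal hMtop],
        ENNReal.ofReal_rpow_of_pos hm, hc]
    rw [hA', hM', hP, ENNReal.ofReal_mul (Real.rpow_nonneg hm.le _)]
    ring
  rw [hRHS]
  -- final chain
  have hWle : W ≤ ENNReal.ofReal (W.toReal + 1) := by
    calc W = ENNReal.ofReal W.toReal := (ENNReal.ofReal_toReal hWt).symm
      _ ≤ ENNReal.ofReal (W.toReal + 1) := ENNReal.ofReal_le_ofReal (by linarith)
  calc ENNReal.ofReal |brOp n α γ f x| ≤ ∫⁻ y, F y := hstepA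
    _ ≤ (∑' j, ∫⁻ y in Ns j, F y) + ∑' j, ∫⁻ y in Ss j, F y := hdecomp
    _ ≤ NK * W1 * (M * ENNReal.ofReal (R ^ ((n:ℝ)-α))) +
          NK * W2 * (A * ENNReal.ofReal (R ^ ((n:ℝ)-α+β))) := add_le_add hnearsum hfarsum
    _ = NK * W * ENNReal.ofReal P := by rw [hbal1, hbal2, hW]; ring
    _ ≤ NK * ENNReal.ofReal (W.toReal + 1) * ENNReal.ofReal P := by
        exact mul_le_mul_left (mul_le_mul_right hWle _) _
    _ = ENNReal.ofReal (W.toReal + 1) * NK * ENNReal.ofReal P := by ring
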